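/- Let k be any field and A = k[x_1,...,x_n]/(x_1^{d_1},...,x_n^{d_n}) with all d_i ≥ 1, and set t = Σ_{i=1}^n (d_i − 1). If max(d_1,...,d_n) > (t + m)/2 for a positive integer m, then the map A_i → A_{i+m} given by f ↦ f·(x_1 + ... + x_n)^m is injective for all i ≤ (t − m)/2. -/

import Mathlib

open MvPolynomial

/-- The monomial complete intersection ideal `(x_1^{d_1}, ..., x_n^{d_n})`. -/
noncomputable def pideal (k : Type) [Field k] {n : ℕ} (d : Fin n → ℕ) :
    Ideal (MvPolynomial (Fin n) k) :=
  Ideal.span (Set.range fun i => (X i : MvPolynomial (Fin n) k) ^ d i)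

/-- The degree-`i` graded component of the quotient `k[x_1,...,x_n]/I`,
viewed as the image of the homogeneous degree-`i` polynomials. -/
noncomputable def qcomp (k : Type) [Field k] {n : ℕ}
    (I : Ideal (MvPolynomial (Fin n) k)) (i : ℕ) :
    Submodule k (MvPolynomial (Fin n) k ⧸ I) :=
  Submodule.map (Ideal.Quotient.mkₐ k I).toLinearMap
    (homogeneousSubmodule (Fin n) k i)

/-- The degree-`i` graded component of `k[x_1,...,x_n]/(x_1^{d_1},...,x_n^{d_n})`. -/
noncomputable def comp (k : Type) [Field k] {n : ℕ} (d : Fin n → ℕ) (i : ℕ) :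
    Submodule k (MvPolynomial (Fin n) k ⧸ pideal k d) :=
  qcomp k (pideal k d) i

/-- Multiplication by `s`, as a map from the subspace `V` to the subspace `W`,
has maximal rank: it is injective or surjective. -/
def maxRankOn {k Q : Type} [Field k] [CommRing Q] [Module k Q]
    (s : Q) (V W : Submodule k Q) : Prop :=
  (∀ f ∈ V, s * f = 0 → f = 0) ∨ (∀ g ∈ W, ∃ f ∈ V, s * f = g)

/-- Membership in the monomial complete intersection ideal. -/
lemma mem_pideal_iff {k : Type} [Field k] {n : ℕ} {d : Fin n → ℕ}
    {p : MvPolynomial (Fin n) k} :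
    p ∈ pideal k d ↔ ∀ u ∈ p.support, ∃ j, d j ≤ u j := by
  have h : pideal k d = Ideal.span ((fun s => monomial s (1 : k)) ''
      (Set.range fun j : Fin n => Finsupp.single j (d j))) := by
    rw [pideal, ← Set.range_comp]
    congr 1
    ext q
    simp [Function.comp, X_pow_eq_monomial]
  rw [h, mem_ideal_span_monomial_image]
  simp [Finsupp.single_le_iff]

/-- One multiplication by `∑ X j'` shifts the top `j`-exponent coefficient faithfully. -/
lemma step_lemma {k : Type} [Field k] {n : ℕ} (j : Fin n) (b : ℕ)
    (r : MvPolynomial (Fin n) k) (hb : ∀ u ∈ r.support, u j ≤ b) :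
    (∀ u ∈ ((∑ j' : Fin n, X j') * r).support, u j ≤ b + 1) ∧
    (∀ μ : Fin n →₀ ℕ, μ j = b →
      coeff (μ + Finsupp.single j 1) ((∑ j' : Fin n, X j') * r) = coeff μ r) := by
  classical
  constructor
  · intro u hu
    rw [mem_support_iff, Finset.sum_mul, coeff_sum] at hu
    obtain ⟨j', -, hj'⟩ := Finset.exists_ne_zero_of_sum_ne_zero hu
    rw [coeff_X_mul'] at hj'
    split_ifs at hj' with h
    · have hmem := hb _ (mem_support_iff.mpr hj')
      rw [Finsupp.tsub_apply] at hmem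
      have hu0 : u j' ≠ 0 := Finsupp.mem_support_iff.mp h
      by_cases hjj : j' = j
      · subst hjj
        rw [Finsupp.single_eq_same] at hmem
        omega
      · rw [Finsupp.single_eq_of_ne (Ne.symm hjj)] at hmem
        omega
    · exact absurd rfl hj'
  · intro μ hμ
    rw [Finset.sum_mul, coeff_sum]
    rw [Finset.sum_eq_single j]
    · rw [coeff_X_mul']
      rw [if_pos (by simp [Finsupp.mem_support_iff])]
      congr 1
      exact add_tsub_cancel_right _ _
    · intro j' _ hjj
      rw [coeff_X_mul']
      split_ifs with h
      · apply notMem_support_iff.mp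
        intro hmem
        have hle := hb _ hmem
        rw [Finsupp.tsub_apply] at hle
        rw [Finsupp.add_apply, Finsupp.single_eq_same, Finsupp.single_eq_of_ne (Ne.symm hjj)] at hle
        omega
      · rfl
    · intro h
      exact absurd (Finset.mem_univ j) h

/-- Multiplication by `(∑ X j')^m` shifts the top `j`-exponent coefficient faithfully. -/
lemma pow_lemma {k : Type} [Field k] {n : ℕ} (j : Fin n) (b m : ℕ)
    (r : MvPolynomial (Fin n) k) (hb : ∀ u ∈ r.support, u j ≤ b) :
    (∀ u ∈ ((∑ j' : Fin n, X j') ^ m * r).support, u j ≤ b + m) ∧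
    (∀ μ : Fin n →₀ ℕ, μ j = b →
      coeff (μ + Finsupp.single j m) ((∑ j' : Fin n, X j') ^ m * r) = coeff μ r) := by
  induction m with
  | zero =>
    constructor
    · simpa using hb
    · intro μ _
      simp
  | succ m ih =>
    have key : (∑ j' : Fin n, X j') ^ (m + 1) * r
        = (∑ j' : Fin n, X j') * ((∑ j' : Fin n, X j') ^ m * r) := by ring
    obtain ⟨ih1, ih2⟩ := ih
    obtain ⟨s1, s2⟩ := step_lemma j (b + m) _ ih1
    constructor
    · intro u hu
      rw [key] at hu
      have := s1 u hu
      omega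
    · intro μ hμ
      rw [key]
      have hμ' : (μ + Finsupp.single j m : Fin n →₀ ℕ) j = b + m := by
        simp [Finsupp.add_apply, hμ]
      have h2 := s2 (μ + Finsupp.single j m) hμ'
      rw [show μ + Finsupp.single j (m + 1)
          = (μ + Finsupp.single j m) + Finsupp.single j 1 by
        rw [add_assoc, ← Finsupp.single_add]]
      rw [h2, ih2 μ hμ]

/-- Over any field: if `max(d_1,...,d_n) > (t + m)/2` with `t = Σ (d_i - 1)`,
then multiplication by `(x_1 + ⋯ + x_n)^m` is injective on `A_i` for `i ≤ (t - m)/2`. -/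
theorem stmt4 {k : Type} [Field k] {n : ℕ}
    (d : Fin n → ℕ) (hd : ∀ i, 1 ≤ d i) (t : ℕ) (ht : t = ∑ i, (d i - 1))
    (m : ℕ) (hm0 : 1 ≤ m) (hm : t + m < 2 * Finset.univ.sup d)
    (i : ℕ) (hi : 2 * i + m ≤ t) :
    ∀ f ∈ comp k d i,
      (Ideal.Quotient.mk (pideal k d) (∑ j, X j)) ^ m * f = 0 → f = 0 := by
  classical
  have hn : (Finset.univ : Finset (Fin n)).Nonempty := by
    rcases (Finset.univ : Finset (Fin n)).eq_empty_or_nonempty with h | h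
    · rw [h, Finset.sup_empty] at hm
      simp at hm
    · exact h
  obtain ⟨j, -, hj⟩ := Finset.exists_mem_eq_sup Finset.univ hn d
  rw [hj] at hm
  have hij : i + m < d j := by omega
  rintro f hf hmul
  simp only [comp, qcomp, Submodule.mem_map, AlgHom.toLinearMap_apply,
    Ideal.Quotient.mkₐ_eq_mk] at hf
  obtain ⟨p, hp, rfl⟩ := hf
  rw [mem_homogeneousSubmodule] at hp
  rw [← map_pow, ← map_mul, Ideal.Quotient.eq_zero_iff_mem] at hmul
  set S := p.support.filter (fun u => ∃ j', d j' ≤ u j') with hS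
  set q := ∑ u ∈ S, monomial u (coeff u p) with hqdef
  have hq : q ∈ pideal k d := by
    apply Ideal.sum_mem
    intro u hu
    rw [mem_pideal_iff]
    intro v hv
    rw [support_monomial] at hv
    split_ifs at hv
    · simp at hv
    · simp only [Finset.mem_singleton] at hv
      subst hv
      exact (Finset.mem_filter.mp hu).2
  have hcq : ∀ v, coeff v q = if v ∈ S then coeff v p else 0 := by
    intro v
    rw [hqdef, coeff_sum]
    simp only [coeff_monomial]
    exact Finset.sum_ite_eq' S v (fun u => coeff u p)
  set r := p - q with hrdef
  have hcr : ∀ v, coeff v r = if v ∈ S then 0 else coeff v p := by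
    intro v
    rw [hrdef, coeff_sub, hcq]
    split_ifs <;> simp
  have hrsup : ∀ u ∈ r.support, u ∈ p.support ∧ ∀ j', u j' < d j' := by
    intro u hu
    have hcu := mem_support_iff.mp hu
    rw [hcr] at hcu
    split_ifs at hcu with h
    · exact absurd rfl hcu
    · have hup : u ∈ p.support := mem_support_iff.mpr hcu
      refine ⟨hup, fun j' => ?_⟩
      by_contra hcon
      push_neg at hcon
      exact h (Finset.mem_filter.mpr ⟨hup, ⟨j', hcon⟩⟩)
  have hrI : (∑ j' : Fin n, X j') ^ m * r ∈ pideal k d := by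
    rw [hrdef, mul_sub]
    exact Submodule.sub_mem _ hmul (Ideal.mul_mem_left _ _ hq)
  have hr0 : r = 0 := by
    by_contra hr
    have hne : r.support.Nonempty :=
      Finset.nonempty_iff_ne_empty.mpr (fun h => hr (support_eq_empty.mp h))
    obtain ⟨μ, hμs, hμmax⟩ := r.support.exists_max_image (fun u => u j) hne
    obtain ⟨-, hcoeff⟩ := pow_lemma j (μ j) m r hμmax
    have hc := hcoeff μ rfl
    have hsup : μ + Finsupp.single j m ∈ ((∑ j' : Fin n, X j') ^ m * r).support := by
      rw [mem_support_iff, hc]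
      exact mem_support_iff.mp hμs
    obtain ⟨j', hj'⟩ := mem_pideal_iff.mp hrI _ hsup
    obtain ⟨hup, hμd⟩ := hrsup μ hμs
    by_cases hjj : j' = j
    · subst hjj
      rw [Finsupp.add_apply, Finsupp.single_eq_same] at hj'
      have hdeg : μ j' ≤ i := by
        have hw := Finsupp.le_weight (1 : Fin n → ℕ) (s := j') one_ne_zero μ
        rwa [hp (mem_support_iff.mp hup)] at hw
      omega
    · rw [Finsupp.add_apply, Finsupp.single_eq_of_ne hjj] at hj'
      have := hμd j'
      omega
  have hpq : p = q := by
    have := sub_eq_zero.mp hr0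
    exact this
  rw [Ideal.Quotient.eq_zero_iff_mem, hpq]
  exact hq
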